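/- For all n ≥ 0, w_{n+1} = (w_{n-1} v_{n-2})^{d_{n+1}} w_{n-1}. -/

import Mathlib

/-- Letters: `a` is `false`, `b` is `true`. -/
abbrev Word := List Bool

/-- `wpow w k` is the `k`-fold concatenation `w^k`. -/
def wpow (w : Word) (k : ℕ) : Word := (List.replicate k w).flatten

lemma wpow_succ (w : Word) (k : ℕ) : wpow w (k + 1) = w ++ wpow w k := by
  simp [wpow, List.replicate_succ]

lemma wpow_conj (x u : Word) (k : ℕ) :
    x ++ wpow (u ++ x) k = wpow (x ++ u) k ++ x := by
  induction k with
  | zero => simp [wpow]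
  | succ k ih =>
      rw [wpow_succ, wpow_succ]
      calc x ++ ((u ++ x) ++ wpow (u ++ x) k)
          = (x ++ u) ++ (x ++ wpow (u ++ x) k) := by simp [List.append_assoc]
        _ = (x ++ u) ++ (wpow (x ++ u) k ++ x) := by rw [ih]
        _ = ((x ++ u) ++ wpow (x ++ u) k) ++ x := by simp [List.append_assoc]

/-- For all `n ≥ 0`, `wₙ₊₁ = (wₙ₋₁ vₙ₋₂)^(dₙ₊₁) wₙ₋₁`. -/
theorem singular_word_power_formula (d : ℤ → ℕ) (s : ℤ → Word)
    (hd : ∀ n : ℤ, 1 ≤ n → 1 ≤ d n)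
    (hs1 : s (-1) = [true]) (hs0 : s 0 = [false])
    (hs : ∀ n : ℤ, 1 ≤ n → s n = wpow (s (n - 1)) (d n) ++ s (n - 2))
    (w : ℤ → Word)
    (hw : ∀ n : ℤ, 0 ≤ n → w n = (if Odd n then [false] else [true]) ++ (s n).dropLast)
    (hwm1 : w (-1) = [false]) (hwm2 : w (-2) = [])
    (v : ℤ → Word)
    (hv : ∀ n : ℤ, -1 ≤ n → v n = (if Odd n then [false] else [true]) ++ (wpow (s (n + 1)) (d (n + 2) - 1) ++ s n).dropLast)
    (hvm2 : v (-2) = []) :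
    ∀ n : ℤ, 0 ≤ n →
      w (n + 1) = wpow (w (n - 1) ++ v (n - 2)) (d (n + 1)) ++ w (n - 1) := by
  -- last letter of `s n` is `true` iff `n` is odd
  have hlastN : ∀ m : ℕ, ∀ n : ℤ, n = (m : ℤ) - 1 →
      s n = (s n).dropLast ++ [if Even n then false else true] := by
    intro m
    induction m using Nat.strong_induction_on with
    | _ m ih =>
      match m with
      | 0 => intro n hn; subst hn; norm_num [hs1]
      | 1 => intro n hn; subst hn; norm_num [hs0]
      | (m + 2) =>
        intro n hn
        have h1 : 1 ≤ n := by omega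
        have hrec := ih m (by omega) (n - 2) (by push_cast [hn]; ring)
        have hne : s (n - 2) ≠ [] := by rw [hrec]; simp
        have hpar : (if Even n then false else true) = (if Even (n - 2) then false else true) := by
          have : Even n ↔ Even (n - 2) := by
            simp only [Int.even_iff]; omega
          exact if_congr this rfl rfl
        rw [hs n h1, List.dropLast_append_of_ne_nil hne, List.append_assoc, hpar]
        rw [← hrec]
  have hlast : ∀ n : ℤ, -1 ≤ n →
      s n = (s n).dropLast ++ [if Even n then false else true] := by
    intro n hn
    exact hlastN (n + 1).toNat n (by omega)
  have hne : ∀ n : ℤ, -1 ≤ n → s n ≠ [] := by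
    intro n hn
    rw [hlast n hn]; simp
  -- the key identity :  w (n-1) ++ v (n-2) = cₙ ++ dropLast (s n)
  have hwv : ∀ n : ℤ, 0 ≤ n →
      w (n - 1) ++ v (n - 2) = (if Even n then [false] else [true]) ++ (s n).dropLast := by
    intro n hn
    obtain rfl | rfl | h2 : n = 0 ∨ n = 1 ∨ 2 ≤ n := by omega
    · norm_num [hwm1, hvm2, hs0]
    · -- n = 1
      have hw0 := hw 0 le_rfl
      have hv1 := hv (-1) (by norm_num)
      norm_num [hs0] at hw0
      norm_num [hs1, hs0] at hv1
      have hd1 : d 1 - 1 + 1 = d 1 := Nat.succ_pred_eq_of_pos (hd 1 le_rfl)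
      have hs1' := hs 1 le_rfl
      norm_num [hs0, hs1] at hs1'
      rw [show (1:ℤ) - 1 = 0 by ring, show (1:ℤ) - 2 = -1 by ring, hw0, hv1]
      rw [show (if Even (1:ℤ) then ([false]:Word) else [true]) = [true] by decide, hs1']
      rw [List.dropLast_append_of_ne_nil (by simp : ([true]:Word) ≠ [])]
      simp only [List.dropLast_singleton, List.append_nil]
      rw [← hd1, wpow_succ]
      simp
    · -- n ≥ 2
      have hwn1 := hw (n - 1) (by omega)
      have hvn2 := hv (n - 2) (by omega)
      rw [show n - 2 + 1 = n - 1 by ring, show n - 2 + 2 = n by ring] at hvn2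
      have hlast1 := hlast (n - 1) (by omega)
      have hne2 : s (n - 2) ≠ [] := hne (n - 2) (by omega)
      have hsn := hs n (by omega)
      have hdn : d n - 1 + 1 = d n := Nat.succ_pred_eq_of_pos (hd n (by omega))
      -- parity rewrites
      have e1 : (if Odd (n - 1) then ([false]:Word) else [true])
          = (if Even n then [false] else [true]) := by
        have : Odd (n - 1) ↔ Even n := by
          simp only [Int.odd_iff, Int.even_iff]; omega
        simp [this]
      have e2 : (if Odd (n - 2) then ([false]:Word) else [true])
          = [if Even (n - 1) then false else true] := by
        have : Odd (n - 2) ↔ Even (n - 1) := by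
          simp only [Int.odd_iff, Int.even_iff]; omega
        by_cases h : Even (n - 1) <;> simp [this, h]
      rw [hwn1, hvn2, e1, e2]
      rw [List.dropLast_append_of_ne_nil hne2]
      rw [hsn, List.dropLast_append_of_ne_nil hne2]
      calc (if Even n then ([false]:Word) else [true]) ++ (s (n-1)).dropLast ++
            ([if Even (n-1) then false else true] ++
              (wpow (s (n-1)) (d n - 1) ++ (s (n-2)).dropLast))
          = (if Even n then ([false]:Word) else [true]) ++
            (((s (n-1)).dropLast ++ [if Even (n-1) then false else true]) ++
              (wpow (s (n-1)) (d n - 1) ++ (s (n-2)).dropLast)) := by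
            simp [List.append_assoc]
        _ = (if Even n then ([false]:Word) else [true]) ++
            (s (n-1) ++ (wpow (s (n-1)) (d n - 1) ++ (s (n-2)).dropLast)) := by
            rw [← hlast1]
        _ = (if Even n then ([false]:Word) else [true]) ++
            (wpow (s (n-1)) (d n) ++ (s (n-2)).dropLast) := by
            rw [← hdn, wpow_succ, hdn, List.append_assoc]
  -- main proof
  intro n hn
  -- w (n-1) = cₙ ++ dropLast (s (n-1))
  have hwn1 : w (n - 1) = (if Even n then [false] else [true]) ++ (s (n - 1)).dropLast := by
    obtain rfl | h1 : n = 0 ∨ 1 ≤ n := by omega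
    · norm_num [hwm1, hs1]
    · rw [hw (n - 1) (by omega)]
      have : Odd (n - 1) ↔ Even n := by simp only [Int.odd_iff, Int.even_iff]; omega
      simp [this]
  have hsn1 := hs (n + 1) (by omega)
  rw [show n + 1 - 1 = n by ring, show n + 1 - 2 = n - 1 by ring] at hsn1
  have hnem1 : s (n - 1) ≠ [] := hne (n - 1) (by omega)
  have e3 : (if Odd (n + 1) then ([false]:Word) else [true])
      = (if Even n then [false] else [true]) := by
    have : Odd (n + 1) ↔ Even n := by simp only [Int.odd_iff, Int.even_iff]; omega
    simp [this]
  rw [hw (n + 1) (by omega), e3, hsn1, List.dropLast_append_of_ne_nil hnem1,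
      hwv n hn, hwn1]
  -- now pure word combinatorics
  have hlastn := hlast n (by omega)
  have hc : (if Even n then ([false]:Word) else [true]) = [if Even n then false else true] := by
    by_cases h : Even n <;> simp [h]
  rw [hc]
  conv_lhs => rw [← List.append_assoc, show wpow (s n) (d (n+1)) = wpow ((s n).dropLast ++ [if Even n then false else true]) (d (n+1)) by rw [← hlastn]]
  rw [wpow_conj]
  simp [List.append_assoc]
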